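/- Suppose ẋ = f(x, Λ(rt)) is a non-autonomous system with Λ(s) → λ₊ as s → ∞, X₊ an attracting fixed point of ẋ = f(x, λ₊) with basin B(X₊, λ₊), and suppose: (i) there exist ε > 0 and S₁ > 0 such that any solution with x(t₀) ∈ B_ε(X₊) and r t₀ > S₁ converges to X₊; (ii) K ⊆ B(X₊, λ₊) is compact. Then there exists S > 0 such that any solution x(t) with x(T) ∈ K and rT > S satisfies x(t) → X₊ as t → ∞. -/

import Mathlib

open Filter Topology

section CBSAaux
open Set Metric Real


lemma gronwallBound_mono_x {d L η : ℝ} (hd : 0 ≤ d) (hL : 0 ≤ L) (hη : 0 ≤ η)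
    {x y : ℝ} (hxy : x ≤ y) :
    gronwallBound d L η x ≤ gronwallBound d L η y := by
  unfold gronwallBound
  split_ifs with h
  · nlinarith
  · have hL' : 0 < L := lt_of_le_of_ne hL (Ne.symm h)
    have h1 : Real.exp (L * x) ≤ Real.exp (L * y) := Real.exp_le_exp.2 (by nlinarith)
    have h2 : 0 ≤ η / L := div_nonneg hη hL
    nlinarith [Real.exp_pos (L * x)]

lemma boot {E : Type*} [NormedAddCommGroup E] [NormedSpace ℝ E]
    (v : E → E) (s : Set E) (L : NNReal)
    (hv : LipschitzOnWith L v s)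
    (g u w : ℝ → E) (τ : ℝ) (hτ : 0 ≤ τ)
    (hg' : ∀ t, HasDerivAt g (v (g t)) t)
    (hu' : ∀ t, HasDerivAt u (w t) t)
    (d η : ℝ) (hη : 0 ≤ η)
    (hw : ∀ t ∈ Set.Icc 0 τ, u t ∈ s → dist (w t) (v (u t)) ≤ η)
    (R : ℝ) (hR : 0 < R)
    (hball : ∀ t ∈ Set.Icc 0 τ, Metric.closedBall (g t) R ⊆ s)
    (hd : dist (u 0) (g 0) ≤ d)
    (hsmall : gronwallBound d L η τ < R) :
    ∀ t ∈ Set.Icc 0 τ, dist (u t) (g t) < R := by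
  have hd0 : 0 ≤ d := le_trans dist_nonneg hd
  have hucont : Continuous u := Differentiable.continuous (fun t => (hu' t).differentiableAt)
  have hgcont : Continuous g := Differentiable.continuous (fun t => (hg' t).differentiableAt)
  have key : ∀ b ∈ Set.Icc (0:ℝ) τ, (∀ t ∈ Set.Icc 0 b, dist (u t) (g t) ≤ R) →
      ∀ t ∈ Set.Icc 0 b, dist (u t) (g t) < R := by
    intro b hb hmem t ht
    have hIcc : Set.Icc (0:ℝ) b ⊆ Set.Icc 0 τ := Set.Icc_subset_Icc le_rfl hb.2
    have husmem : ∀ t' ∈ Set.Ico (0:ℝ) b, u t' ∈ s := by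
      intro t' ht'
      have ht'' := hIcc (Set.Ico_subset_Icc_self ht')
      exact hball t' ht'' (Metric.mem_closedBall.2 (hmem t' (Set.Ico_subset_Icc_self ht')))
    have hmain := dist_le_of_approx_trajectories_ODE_of_mem
      (v := fun _ => v) (s := fun _ => s) (K := L) (a := 0) (b := b)
      (f := u) (f' := w) (g := g) (g' := fun t => v (g t)) (εf := η) (εg := 0) (δ := d)
      (fun _ _ => hv)
      hucont.continuousOn
      (fun t' _ => (hu' t').hasDerivWithinAt)
      (fun t' ht' => hw t' (hIcc (Set.Ico_subset_Icc_self ht')) (husmem t' ht'))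
      husmem
      hgcont.continuousOn
      (fun t' _ => (hg' t').hasDerivWithinAt)
      (fun t' _ => by simp)
      (fun t' ht' => hball t' (hIcc (Set.Ico_subset_Icc_self ht'))
        (Metric.mem_closedBall_self hR.le))
      hd
      t ht
    have : gronwallBound d L (η + 0) (t - 0) ≤ gronwallBound d L η τ := by
      rw [add_zero, sub_zero]
      exact gronwallBound_mono_x hd0 (NNReal.coe_nonneg L) hη (le_trans ht.2 hb.2)
    linarith
  set A := {b : ℝ | b ∈ Set.Icc 0 τ ∧ ∀ t ∈ Set.Icc 0 b, dist (u t) (g t) ≤ R} with hA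
  have hdR : d < R := by
    have h := gronwallBound_mono_x hd0 (NNReal.coe_nonneg L) hη hτ (x := 0)
    rw [gronwallBound_x0] at h
    linarith
  have h0A : (0:ℝ) ∈ A := by
    refine ⟨⟨le_rfl, hτ⟩, ?_⟩
    intro t ht
    have : t = 0 := le_antisymm ht.2 ht.1
    subst this
    linarith
  have hAbdd : BddAbove A := ⟨τ, fun b hb => hb.1.2⟩
  set T := sSup A with hT
  have hT0 : 0 ≤ T := le_csSup hAbdd h0A
  have hTτ : T ≤ τ := csSup_le ⟨0, h0A⟩ (fun b hb => hb.1.2)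
  have hlt_case : ∀ t, 0 ≤ t → t < T → dist (u t) (g t) ≤ R := by
    intro t ht0 htT
    obtain ⟨b, hbA, htb⟩ := exists_lt_of_lt_csSup ⟨0, h0A⟩ htT
    exact hbA.2 t ⟨ht0, htb.le⟩
  have hTA : ∀ t ∈ Set.Icc 0 T, dist (u t) (g t) ≤ R := by
    intro t ht
    rcases lt_or_eq_of_le ht.2 with hlt | heq
    · exact hlt_case t ht.1 hlt
    · rcases eq_or_lt_of_le ht.1 with h0 | h0
      · rw [← h0]; linarith [hd]
      · have htend : Tendsto (fun s => dist (u s) (g s)) (𝓝[<] t) (𝓝 (dist (u t) (g t))) :=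
          ((hucont.dist hgcont).tendsto t).mono_left nhdsWithin_le_nhds
        refine le_of_tendsto htend ?_
        filter_upwards [Ioo_mem_nhdsLT_of_mem (⟨h0, le_rfl⟩ : t ∈ Set.Ioc 0 t)] with s hs
        exact hlt_case s hs.1.le (hs.2.trans_le (le_of_eq heq))
  have hTlt := key T ⟨hT0, hTτ⟩ hTA
  have hTeq : T = τ := by
    by_contra hne
    have hTltτ : T < τ := lt_of_le_of_ne hTτ hne
    have hUT : dist (u T) (g T) < R := hTlt T ⟨hT0, le_rfl⟩
    have hcont : Continuous fun s => dist (u s) (g s) := hucont.dist hgcont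
    have hev : ∀ᶠ s in 𝓝 T, dist (u s) (g s) < R :=
      (hcont.tendsto T).eventually (gt_mem_nhds hUT)
    obtain ⟨c, hc0, hcP⟩ := Metric.eventually_nhds_iff.mp hev
    set b' := min (T + c/2) τ with hb'
    have hb'T : T < b' := lt_min (by linarith) hTltτ
    have hb'A : b' ∈ A := by
      refine ⟨⟨by linarith, min_le_right _ _⟩, ?_⟩
      intro t ht
      rcases le_or_gt t T with h | h
      · exact hTA t ⟨ht.1, h⟩
      · refine (hcP ?_).le
        rw [Real.dist_eq, abs_lt]
        have : t ≤ T + c/2 := le_trans ht.2 (min_le_left _ _)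
        constructor <;> linarith
    have := le_csSup hAbdd hb'A
    linarith
  intro t ht
  exact hTlt t ⟨ht.1, by rw [hTeq]; exact ht.2⟩

lemma exists_lip {n : ℕ} (f : EuclideanSpace ℝ (Fin n) → ℝ → EuclideanSpace ℝ (Fin n))
    (hf : ContDiff ℝ 2 fun p : EuclideanSpace ℝ (Fin n) × ℝ => f p.1 p.2) (lamp ρ : ℝ) :
    ∃ L : NNReal,
      (LipschitzOnWith L (fun x => f x lamp) (Metric.closedBall 0 ρ)) ∧
      (∀ p ∈ Metric.closedBall (0 : EuclideanSpace ℝ (Fin n)) ρ, ∀ μ : ℝ,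
        |μ - lamp| ≤ 1 → dist (f p μ) (f p lamp) ≤ L * |μ - lamp|) := by
  set F := fun p : EuclideanSpace ℝ (Fin n) × ℝ => f p.1 p.2 with hF
  have hF1 : ContDiff ℝ 1 F := hf.of_le (by norm_num)
  set ρ' := |ρ| + |lamp| + 1 with hρ'
  have hcont : ContinuousOn (fun p => ‖fderiv ℝ F p‖)
      (Metric.closedBall (0 : EuclideanSpace ℝ (Fin n) × ℝ) ρ') :=
    ((hF1.continuous_fderiv one_ne_zero).norm).continuousOn
  obtain ⟨C, hC⟩ := (isCompact_closedBall (0 : EuclideanSpace ℝ (Fin n) × ℝ) ρ').exists_bound_of_continuousOn hcont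
  set L : NNReal := ⟨max C 0, le_max_right _ _⟩ with hL
  have hlip : LipschitzOnWith L F (Metric.closedBall 0 ρ') := by
    apply (convex_closedBall _ _).lipschitzOnWith_of_nnnorm_fderiv_le
      (fun x _ => hF1.differentiable one_ne_zero x)
    intro x hx
    have h1 : ‖fderiv ℝ F x‖ ≤ max C 0 := le_trans (by simpa using hC x hx) (le_max_left _ _)
    have h2 : (L : ℝ) = max C 0 := rfl
    rw [← NNReal.coe_le_coe, coe_nnnorm, h2]
    exact h1
  have hmem : ∀ (x : EuclideanSpace ℝ (Fin n)) (μ : ℝ), ‖x‖ ≤ ρ → |μ - lamp| ≤ 1 →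
      (x, μ) ∈ Metric.closedBall (0 : EuclideanSpace ℝ (Fin n) × ℝ) ρ' := by
    intro x μ hx hμ
    rw [Metric.mem_closedBall, dist_zero_right, Prod.norm_def]
    have h1 : ‖x‖ ≤ ρ' := by
      have := le_abs_self ρ; have := abs_nonneg lamp; simp only [hρ']; linarith
    have h2 : ‖μ‖ ≤ ρ' := by
      have := abs_sub_abs_le_abs_sub μ lamp
      have := abs_nonneg ρ
      simp only [Real.norm_eq_abs, hρ']; linarith
    exact max_le h1 h2
  refine ⟨L, ?_, ?_⟩
  · rw [lipschitzOnWith_iff_dist_le_mul]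
    intro x hx y hy
    rw [Metric.mem_closedBall, dist_zero_right] at hx hy
    have h1 := hlip.dist_le_mul (x, lamp) (hmem x lamp hx (by simp)) (y, lamp)
      (hmem y lamp hy (by simp))
    have h2 : dist ((x, lamp) : EuclideanSpace ℝ (Fin n) × ℝ) (y, lamp) = dist x y := by
      rw [Prod.dist_eq]; simp [max_eq_left dist_nonneg]
    calc dist (f x lamp) (f y lamp) ≤ L * dist ((x, lamp) : EuclideanSpace ℝ (Fin n) × ℝ) (y, lamp) := h1
    _ = L * dist x y := by rw [h2]
  · intro p hp μ hμ
    rw [Metric.mem_closedBall, dist_zero_right] at hp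
    have h1 := hlip.dist_le_mul (p, μ) (hmem p μ hp hμ) (p, lamp) (hmem p lamp hp (by simp))
    have h2 : dist ((p, μ) : EuclideanSpace ℝ (Fin n) × ℝ) (p, lamp) = |μ - lamp| := by
      rw [Prod.dist_eq]; simp [Real.dist_eq, max_eq_right (abs_nonneg (μ - lamp))]
    calc dist (f p μ) (f p lamp) ≤ L * dist ((p, μ) : EuclideanSpace ℝ (Fin n) × ℝ) (p, lamp) := h1
    _ = L * |μ - lamp| := by rw [h2]


end CBSAaux

section
open Set Metric Real

/-- Lemma on end behavior (compact subsets of the basin attract): for the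
non-autonomous system `ẋ = f(x, Λ(rt))` with `Λ(s) → λ₊`, where `X₊` is an
attracting fixed point of the frozen system at `λ₊` with flow `φ` and basin
`B`, assume (i) there are `ε > 0` and `S₁ > 0` such that any solution lying
within `ε` of `X₊` at some time `t₀` with `r t₀ > S₁` converges to `X₊`, and
(ii) `K ⊆ B` is compact. Then there is `S > 0` such that any solution with
`x(T) ∈ K` and `rT > S` converges to `X₊`. -/
theorem compact_basin_subset_attracts {n : ℕ}
    (f : EuclideanSpace ℝ (Fin n) → ℝ → EuclideanSpace ℝ (Fin n))
    (hf : ContDiff ℝ 2 fun p : EuclideanSpace ℝ (Fin n) × ℝ => f p.1 p.2)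
    (Λ : ℝ → ℝ) (lamp : ℝ) (hΛ : Tendsto Λ atTop (𝓝 lamp))
    (r : ℝ) (hr : 0 < r)
    (Xp : EuclideanSpace ℝ (Fin n)) (hXp : f Xp lamp = 0)
    (φ : EuclideanSpace ℝ (Fin n) → ℝ → EuclideanSpace ℝ (Fin n))
    (hφ0 : ∀ y, φ y 0 = y)
    (hφ : ∀ y t, HasDerivAt (φ y) (f (φ y t) lamp) t)
    (B : Set (EuclideanSpace ℝ (Fin n)))
    (hB : B = {y | Tendsto (fun t => φ y t) atTop (𝓝 Xp)})
    (hstab : ∀ η > 0, ∃ δ > 0, ∀ y, dist y Xp < δ →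
      ∀ t ≥ (0 : ℝ), dist (φ y t) Xp < η)
    (ε S₁ : ℝ) (hε : 0 < ε) (hS₁ : 0 < S₁)
    (hi : ∀ (x : ℝ → EuclideanSpace ℝ (Fin n)),
      (∀ t, HasDerivAt x (f (x t) (Λ (r * t))) t) →
      ∀ t₀, dist (x t₀) Xp < ε → S₁ < r * t₀ →
        Tendsto x atTop (𝓝 Xp))
    (K : Set (EuclideanSpace ℝ (Fin n))) (hK : IsCompact K) (hKB : K ⊆ B) :
    ∃ S > 0, ∀ (x : ℝ → EuclideanSpace ℝ (Fin n)),
      (∀ t, HasDerivAt x (f (x t) (Λ (r * t))) t) →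
      ∀ T, x T ∈ K → S < r * T → Tendsto x atTop (𝓝 Xp) := by
  classical
  rcases K.eq_empty_or_nonempty with hKe | hKne
  · refine ⟨S₁ + 1, by linarith, ?_⟩
    intro x hx T hTK hST
    rw [hKe] at hTK
    exact absurd hTK (Set.notMem_empty _)
  have contφ : ∀ z, Continuous (φ z) := fun z =>
    Differentiable.continuous (fun t => (hφ z t).differentiableAt)
  have curvebound : ∀ (c : ℝ → EuclideanSpace ℝ (Fin n)), Continuous c → ∀ τ : ℝ,
      ∃ M, 0 ≤ M ∧ ∀ t ∈ Set.Icc 0 τ, ‖c t‖ ≤ M := by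
    intro c hc τ
    obtain ⟨C, hC⟩ :=
      (isCompact_Icc (a := (0:ℝ)) (b := τ)).exists_bound_of_continuousOn hc.continuousOn
    exact ⟨max C 0, le_max_right _ _, fun t ht => (hC t ht).trans (le_max_left _ _)⟩
  -- semigroup property of the frozen flow, from uniqueness of ODE solutions
  have semi : ∀ z τ, 0 ≤ τ → ∀ t, 0 ≤ t → φ z (τ + t) = φ (φ z τ) t := by
    intro z τ hτ t ht
    set a : ℝ → EuclideanSpace ℝ (Fin n) := fun s => φ z (τ + s) with ha_def
    have ha' : ∀ s, HasDerivAt a (f (a s) lamp) s := by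
      intro s
      have h1 : HasDerivAt (fun s : ℝ => τ + s) 1 s := (hasDerivAt_id s).const_add τ
      have h2 := (hφ z (τ + s)).scomp s h1
      rw [one_smul] at h2; exact h2
    have hacont : Continuous a := (contφ z).comp (continuous_const.add continuous_id)
    obtain ⟨Ma, hMa0, hMa⟩ := curvebound a hacont t
    obtain ⟨Mb, hMb0, hMb⟩ := curvebound (φ (φ z τ)) (contφ _) t
    obtain ⟨L, hLx, -⟩ := exists_lip f hf lamp (max Ma Mb)
    have heq := ODE_solution_unique_of_mem_Icc_right
      (v := fun _ x => f x lamp) (s := fun _ => Metric.closedBall 0 (max Ma Mb)) (K := L)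
      (fun _ _ => hLx) (a := 0) (b := t)
      hacont.continuousOn (fun s _ => (ha' s).hasDerivWithinAt)
      (fun s hs => by
        rw [Metric.mem_closedBall, dist_zero_right]
        exact (hMa s (Set.Ico_subset_Icc_self hs)).trans (le_max_left _ _))
      (contφ _).continuousOn (fun s _ => (hφ (φ z τ) s).hasDerivWithinAt)
      (fun s hs => by
        rw [Metric.mem_closedBall, dist_zero_right]
        exact (hMb s (Set.Ico_subset_Icc_self hs)).trans (le_max_right _ _))
      (by simp [ha_def, hφ0])
    exact heq ⟨ht, le_rfl⟩
  obtain ⟨δ, hδpos, hδ⟩ := hstab (ε / 2) (by linarith)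
  have hBmem : ∀ y ∈ K, Tendsto (fun t => φ y t) atTop (𝓝 Xp) := by
    intro y hy
    have := hKB hy
    rw [hB] at this
    exact this
  -- the per-point statement
  have key : ∀ y ∈ K, ∃ ρ > 0, ∃ τ ≥ (0:ℝ), ∃ C : ℝ, ∀ z, dist z y < ρ →
      (∀ t, 0 ≤ t → ‖φ z t‖ ≤ C) ∧ (∀ t, τ ≤ t → dist (φ z t) Xp < ε / 2) := by
    intro y hyK
    have hy := hBmem y hyK
    have h1 : ∀ᶠ t in atTop, φ y t ∈ Metric.ball Xp (δ / 2) :=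
      hy (Metric.ball_mem_nhds _ (by linarith))
    obtain ⟨τ, hτ0, hτd⟩ : ∃ τ, 0 ≤ τ ∧ dist (φ y τ) Xp < δ / 2 := by
      obtain ⟨τ, hh1, hh2⟩ := ((eventually_ge_atTop (0:ℝ)).and h1).exists
      exact ⟨τ, hh1, by simpa [Metric.mem_ball] using hh2⟩
    obtain ⟨My, hMy0, hMy⟩ := curvebound (φ y) (contφ y) τ
    set R : ℝ := min (δ / 2) 1 with hRdef
    have hR0 : 0 < R := lt_min (by linarith) one_pos
    have hR1 : R ≤ 1 := min_le_right _ _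
    have hRδ : R ≤ δ / 2 := min_le_left _ _
    obtain ⟨L, hLx, -⟩ := exists_lip f hf lamp (My + 1)
    set e : ℝ := Real.exp (L * τ) with he_def
    have he1 : 1 ≤ e := Real.one_le_exp (by positivity)
    set ρ : ℝ := R / (e + 1) with hρdef
    have hρ0 : 0 < ρ := div_pos hR0 (by linarith)
    refine ⟨ρ, hρ0, τ, hτ0, max (My + 1) (‖Xp‖ + ε / 2), ?_⟩
    intro z hz
    have hboot : ∀ t ∈ Set.Icc 0 τ, dist (φ z t) (φ y t) < R := by
      apply boot (fun x => f x lamp) (Metric.closedBall 0 (My + 1)) L hLx (φ y) (φ z)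
        (fun t => f (φ z t) lamp) τ hτ0 (hφ y) (hφ z) (dist z y) 0 le_rfl
        (fun t _ _ => by simp) R hR0
      · intro t ht p hp
        rw [Metric.mem_closedBall] at hp
        rw [Metric.mem_closedBall, dist_zero_right]
        have h2 := hMy t ht
        have h3 : dist p 0 ≤ dist p (φ y t) + dist (φ y t) 0 := dist_triangle _ _ _
        rw [dist_zero_right, dist_zero_right] at h3
        linarith
      · rw [hφ0, hφ0]
      · rw [gronwallBound_ε0]
        have h4 : dist z y * e < ρ * e := by
          apply mul_lt_mul_of_pos_right hz (by positivity)
        have h5 : ρ * e < R := by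
          rw [hρdef, div_mul_eq_mul_div, div_lt_iff₀ (by linarith)]
          nlinarith
        calc dist z y * Real.exp (↑L * τ) = dist z y * e := by rw [he_def]
        _ < R := lt_trans h4 h5
    have hzτ : dist (φ z τ) Xp < δ := by
      have h2 := hboot τ ⟨hτ0, le_rfl⟩
      have h3 := dist_triangle (φ z τ) (φ y τ) Xp
      linarith
    have hafter : ∀ t, τ ≤ t → dist (φ z t) Xp < ε / 2 := by
      intro t htτ
      have h2 := hδ (φ z τ) hzτ (t - τ) (by linarith)
      have h3 := semi z τ hτ0 (t - τ) (by linarith)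
      rw [show τ + (t - τ) = t by ring] at h3
      rw [← h3] at h2
      exact h2
    refine ⟨?_, hafter⟩
    intro t ht0
    rcases le_total t τ with h | h
    · have h2 := hboot t ⟨ht0, h⟩
      have h3 := hMy t ⟨ht0, h⟩
      have h4 : ‖φ z t‖ - ‖φ y t‖ ≤ ‖φ z t - φ y t‖ := norm_sub_norm_le _ _
      rw [← dist_eq_norm] at h4
      have : ‖φ z t‖ ≤ My + 1 := by linarith
      exact this.trans (le_max_left _ _)
    · have h2 := hafter t h
      have h3 : dist (φ z t) 0 ≤ dist (φ z t) Xp + dist Xp 0 := dist_triangle _ _ _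
      rw [dist_zero_right, dist_zero_right] at h3
      have : ‖φ z t‖ ≤ ‖Xp‖ + ε / 2 := by linarith
      exact this.trans (le_max_right _ _)
  choose! ρf hρpos τf hτ0f Cf hPf using key
  obtain ⟨t, htK, hcov⟩ := hK.elim_nhds_subcover (fun y => Metric.ball y (ρf y))
    (fun y hy => Metric.ball_mem_nhds y (hρpos y hy))
  obtain ⟨k0, hk0⟩ := hKne
  have htne : t.Nonempty := by
    have hmem := hcov hk0
    rw [Set.mem_iUnion₂] at hmem
    obtain ⟨y, hyt, -⟩ := hmem
    exact ⟨y, hyt⟩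
  set T₀ : ℝ := t.sup' htne τf with hT₀def
  have hT₀0 : 0 ≤ T₀ := by
    obtain ⟨y0, hy0⟩ := htne
    exact le_trans (hτ0f y0 (htK y0 hy0)) (Finset.le_sup' τf hy0)
  set Cb : ℝ := t.sup' htne Cf with hCbdef
  have hzfact : ∀ z ∈ K, (∀ s, 0 ≤ s → ‖φ z s‖ ≤ Cb) ∧ dist (φ z T₀) Xp < ε / 2 := by
    intro z hzK
    have hmem := hcov hzK
    rw [Set.mem_iUnion₂] at hmem
    obtain ⟨y, hyt, hzy⟩ := hmem
    have hyK := htK y hyt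
    rw [Metric.mem_ball] at hzy
    obtain ⟨hCz, haf⟩ := hPf y hyK z hzy
    refine ⟨fun s hs => (hCz s hs).trans (Finset.le_sup' Cf hyt), ?_⟩
    exact haf T₀ (Finset.le_sup' τf hyt)
  have hCb0 : 0 ≤ Cb := le_trans (norm_nonneg _) ((hzfact k0 hk0).1 0 le_rfl)
  set Mb : ℝ := max Cb ‖Xp‖ with hMbdef
  have hMb0 : 0 ≤ Mb := le_trans hCb0 (le_max_left _ _)
  obtain ⟨L, hLx, hLlam⟩ := exists_lip f hf lamp (Mb + 1)
  set R' : ℝ := min (ε / 4) 1 with hR'def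
  have hR'0 : 0 < R' := lt_min (by linarith) one_pos
  have hR'1 : R' ≤ 1 := min_le_right _ _
  have hR'ε : R' ≤ ε / 4 := min_le_left _ _
  -- choose η small so that the Gronwall bound over [0, T₀] is < R'
  have hcontη : Continuous fun η : ℝ => gronwallBound 0 L η T₀ :=
    gronwallBound_continuous_ε 0 L T₀
  have hev : ∀ᶠ η in 𝓝 (0:ℝ), gronwallBound 0 L η T₀ < R' := by
    have h := hcontη.tendsto 0
    rw [gronwallBound_ε0_δ0] at h
    exact h.eventually (gt_mem_nhds hR'0)
  obtain ⟨c, hc0, hcP⟩ := Metric.eventually_nhds_iff.mp hev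
  set η : ℝ := c / 2 with hηdef
  have hη0 : 0 < η := by linarith
  have hηP : gronwallBound 0 L η T₀ < R' := by
    apply hcP
    rw [Real.dist_eq, sub_zero, abs_of_pos hη0]
    linarith
  set η' : ℝ := min (η / (L + 1)) 1 with hη'def
  have hη'0 : 0 < η' := lt_min (div_pos hη0 (by positivity)) one_pos
  have hη'1 : η' ≤ 1 := min_le_right _ _
  have hη'2 : η' ≤ η / (L + 1) := min_le_left _ _
  obtain ⟨S₂, hS₂⟩ := (Metric.tendsto_atTop.mp hΛ) η' hη'0
  refine ⟨max (max S₁ S₂) 1, lt_of_lt_of_le one_pos (le_max_right _ _), ?_⟩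
  intro x hx T hTK hST
  have hrT1 : S₁ < r * T := lt_of_le_of_lt (le_trans (le_max_left _ _) (le_max_left _ _)) hST
  have hrT2 : S₂ ≤ r * T :=
    le_of_lt (lt_of_le_of_lt (le_trans (le_max_right _ _) (le_max_left _ _)) hST)
  have hgb : ∀ s, 0 ≤ s → ‖φ (x T) s‖ ≤ Cb := (hzfact (x T) hTK).1
  have hbootB : ∀ s ∈ Set.Icc 0 T₀, dist (x (T + s)) (φ (x T) s) < R' := by
    apply boot (fun p => f p lamp) (Metric.closedBall 0 (Mb + 1)) L hLx (φ (x T))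
      (fun s => x (T + s)) (fun s => f (x (T + s)) (Λ (r * (T + s)))) T₀ hT₀0 (hφ (x T))
      ?_ 0 η hη0.le ?_ R' hR'0 ?_ ?_ ?_
    · intro s
      have h1 : HasDerivAt (fun s : ℝ => T + s) 1 s := (hasDerivAt_id s).const_add T
      have h2 := (hx (T + s)).scomp s h1
      rw [one_smul] at h2; exact h2
    · intro s hs hmem
      have hrs : S₂ ≤ r * (T + s) := by nlinarith [hs.1]
      have hΛs := hS₂ (r * (T + s)) hrs
      rw [Real.dist_eq] at hΛs
      have h3 := hLlam (x (T + s)) hmem (Λ (r * (T + s))) (le_trans hΛs.le hη'1)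
      have h4 : (L : ℝ) * |Λ (r * (T + s)) - lamp| ≤ L * η' :=
        mul_le_mul_of_nonneg_left hΛs.le (NNReal.coe_nonneg L)
      have h5 : (L : ℝ) * η' ≤ η := by
        have h6 : (L : ℝ) * η' ≤ (L : ℝ) * (η / (L + 1)) :=
          mul_le_mul_of_nonneg_left hη'2 (NNReal.coe_nonneg L)
        have h7 : (L : ℝ) * (η / (L + 1)) ≤ ((L : ℝ) + 1) * (η / (L + 1)) := by
          apply mul_le_mul_of_nonneg_right (by linarith) (by positivity)
        have h8 : ((L : ℝ) + 1) * (η / (L + 1)) = η := by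
          field_simp
        linarith
      linarith
    · intro s hs p hp
      rw [Metric.mem_closedBall] at hp
      rw [Metric.mem_closedBall, dist_zero_right]
      have h2 := hgb s hs.1
      have h3 : dist p 0 ≤ dist p (φ (x T) s) + dist (φ (x T) s) 0 := dist_triangle _ _ _
      rw [dist_zero_right, dist_zero_right] at h3
      have h4 : Cb ≤ Mb := le_max_left _ _
      linarith
    · simp [hφ0]
    · exact hηP
  have hfinal : dist (x (T + T₀)) Xp < ε := by
    have h1 := hbootB T₀ ⟨hT₀0, le_rfl⟩
    have h2 := (hzfact (x T) hTK).2
    have h3 := dist_triangle (x (T + T₀)) (φ (x T) T₀) Xp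
    linarith
  apply hi x hx (T + T₀) hfinal
  have h4 : r * (T + T₀) = r * T + r * T₀ := mul_add _ _ _
  have h5 : 0 ≤ r * T₀ := mul_nonneg hr.le hT₀0
  linarith

end
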